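/- If two probability densities p and q on a set X are both everywhere positive and differentiable, and ν is a probability measure on X with full support such that the scores s_p = ∇log p and s_q = ∇log q are square-integrable with respect to ν, then the generalized Fisher divergence GFD_ν(p,q) := ∫ ‖s_p(x) − s_q(x)‖² dν(x) equals 0 if and only if p = q. -/

import Mathlib

open MeasureTheory

/-- A function with zero Fréchet derivative on an open preconnected set is constant there. -/
lemma const_of_fderiv_zero {E : Type*} [NormedAddCommGroup E] [NormedSpace ℝ E]
    {s : Set E} (hs : IsOpen s) (hsc : IsPreconnected s) {f : E → ℝ}
    (hf : ∀ x ∈ s, HasFDerivAt f (0 : E →L[ℝ] ℝ) x)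
    {x y : E} (hx : x ∈ s) (hy : y ∈ s) : f x = f y := by
  haveI : PreconnectedSpace s := Subtype.preconnectedSpace hsc
  have hloc : IsLocallyConstant (fun z : s => f z.1) := by
    rw [IsLocallyConstant.iff_exists_open]
    rintro ⟨z, hz⟩
    obtain ⟨ε, hε, hball⟩ := Metric.isOpen_iff.1 hs z hz
    refine ⟨Subtype.val ⁻¹' Metric.ball z ε, continuous_subtype_val.isOpen_preimage _
      Metric.isOpen_ball, Metric.mem_ball_self hε, ?_⟩
    rintro ⟨w, hw⟩ hwball
    exact (convex_ball z ε).is_const_of_fderivWithin_eq_zero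
      (fun u hu => ((hf u (hball hu)).differentiableAt).differentiableWithinAt)
      (fun u hu => by
        rw [fderivWithin_of_isOpen Metric.isOpen_ball hu]
        exact (hf u (hball hu)).fderiv)
      hwball (Metric.mem_ball_self hε)
  exact hloc.apply_eq_of_preconnectedSpace ⟨x, hx⟩ ⟨y, hy⟩

/-- The generalized Fisher divergence `GFD_ν(p,q) = ∫ ‖s_p - s_q‖² dν`
between two strictly positive, differentiable probability densities on an open
connected set `X`, with `ν` a probability measure of full support on `X` and
square-integrable scores, vanishes iff `p = q` on `X`. -/
theorem stmt_0 {d : ℕ}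
    (X : Set (EuclideanSpace ℝ (Fin d))) (hXo : IsOpen X) (hXc : IsConnected X)
    (p q : EuclideanSpace ℝ (Fin d) → ℝ)
    (sp sq : EuclideanSpace ℝ (Fin d) → EuclideanSpace ℝ (Fin d))
    (hp_pos : ∀ x ∈ X, 0 < p x) (hq_pos : ∀ x ∈ X, 0 < q x)
    (hp_diff : ContDiffOn ℝ 1 p X) (hq_diff : ContDiffOn ℝ 1 q X)
    (hsp : ∀ x ∈ X, HasGradientAt (fun y => Real.log (p y)) (sp x) x)
    (hsq : ∀ x ∈ X, HasGradientAt (fun y => Real.log (q y)) (sq x) x)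
    (hp_norm : ∫ x in X, p x = 1) (hq_norm : ∫ x in X, q x = 1)
    (ν : Measure (EuclideanSpace ℝ (Fin d))) [IsProbabilityMeasure ν]
    (hν_supp : ∀ U : Set (EuclideanSpace ℝ (Fin d)), IsOpen U → (U ∩ X).Nonempty → 0 < ν U)
    (hνX : ν X = 1)
    (hsp_int : Integrable (fun x => ‖sp x‖ ^ 2) ν)
    (hsq_int : Integrable (fun x => ‖sq x‖ ^ 2) ν) :
    (∫ x, ‖sp x - sq x‖ ^ 2 ∂ν) = 0 ↔ Set.EqOn p q X := by
  have hXmeas : MeasurableSet X := hXo.measurableSet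
  -- ν lives on X
  have hXc' : ν Xᶜ = 0 := by
    have := measure_compl hXmeas (measure_ne_top ν X)
    rw [hνX] at this
    simpa using this
  have hXae : ∀ᵐ x ∂ν, x ∈ X := by
    rw [MeasureTheory.ae_iff]
    exact hXc'
  have hrestr : ν.restrict X = ν := Measure.restrict_eq_self_of_ae_mem hXae
  -- log p and log q are C¹ on X
  have hLp : ContDiffOn ℝ 1 (fun y => Real.log (p y)) X :=
    hp_diff.log (fun x hx => (hp_pos x hx).ne')
  have hLq : ContDiffOn ℝ 1 (fun y => Real.log (q y)) X :=
    hq_diff.log (fun x hx => (hq_pos x hx).ne')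
  -- continuity of the scores on X
  have hsp_cont : ContinuousOn sp X := by
    have hf := hLp.continuousOn_fderiv_of_isOpen hXo le_rfl
    have : ContinuousOn (fun x => (InnerProductSpace.toDual ℝ (EuclideanSpace ℝ (Fin d))).symm
        (fderiv ℝ (fun y => Real.log (p y)) x)) X :=
      (InnerProductSpace.toDual ℝ (EuclideanSpace ℝ (Fin d))).symm.continuous.comp_continuousOn hf
    refine this.congr fun x hx => ?_
    beta_reduce
    rw [((hsp x hx).hasFDerivAt).fderiv]
    simp
  have hsq_cont : ContinuousOn sq X := by
    have hf := hLq.continuousOn_fderiv_of_isOpen hXo le_rfl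
    have : ContinuousOn (fun x => (InnerProductSpace.toDual ℝ (EuclideanSpace ℝ (Fin d))).symm
        (fderiv ℝ (fun y => Real.log (q y)) x)) X :=
      (InnerProductSpace.toDual ℝ (EuclideanSpace ℝ (Fin d))).symm.continuous.comp_continuousOn hf
    refine this.congr fun x hx => ?_
    beta_reduce
    rw [((hsq x hx).hasFDerivAt).fderiv]
    simp
  set g : EuclideanSpace ℝ (Fin d) → ℝ := fun x => ‖sp x - sq x‖ ^ 2 with hg_def
  have hg_cont : ContinuousOn g X := ((hsp_cont.sub hsq_cont).norm.pow 2)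
  have hg_meas : AEStronglyMeasurable g ν := by
    rw [← hrestr]
    exact hg_cont.aestronglyMeasurable hXmeas
  have hg_int : Integrable g ν := by
    refine Integrable.mono' ((hsp_int.add hsq_int).const_mul 2) hg_meas ?_
    filter_upwards with x
    have h1 : ‖sp x - sq x‖ ≤ ‖sp x‖ + ‖sq x‖ := norm_sub_le _ _
    have h2 : (0:ℝ) ≤ ‖sp x - sq x‖ := norm_nonneg _
    have h3 : (0:ℝ) ≤ ‖sp x‖ := norm_nonneg _
    have h4 : (0:ℝ) ≤ ‖sq x‖ := norm_nonneg _
    have : ‖g x‖ = ‖sp x - sq x‖ ^ 2 := by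
      simp [hg_def, abs_of_nonneg (pow_nonneg h2 2)]
    rw [this]
    simp only [Pi.add_apply]
    nlinarith [sq_nonneg (‖sp x‖ - ‖sq x‖), pow_le_pow_left₀ h2 h1 2]
  constructor
  · intro h0
    -- the integrand vanishes a.e.
    have hae : g =ᵐ[ν] 0 :=
      (integral_eq_zero_iff_of_nonneg (fun x => by positivity) hg_int).1 h0
    -- hence sp = sq on X by continuity and full support
    have hspq : Set.EqOn sp sq X := by
      intro x hx
      by_contra hne
      set U : Set (EuclideanSpace ℝ (Fin d)) := X ∩ (fun z => sp z - sq z) ⁻¹' ({0}ᶜ) with hU_def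
      have hUo : IsOpen U :=
        (hsp_cont.sub hsq_cont).isOpen_inter_preimage hXo isOpen_compl_singleton
      have hxU : x ∈ U := ⟨hx, by simpa [sub_eq_zero] using hne⟩
      have hpos : 0 < ν U := hν_supp U hUo ⟨x, hxU, hx⟩
      have hsub : U ⊆ {z | ¬ g z = 0} := by
        rintro z ⟨-, hz⟩
        simp only [Set.mem_preimage, Set.mem_compl_iff, Set.mem_singleton_iff] at hz
        simp only [Set.mem_setOf_eq, hg_def]
        exact pow_ne_zero 2 (norm_ne_zero_iff.mpr hz)
      have : ν U = 0 := le_antisymm (le_trans (measure_mono hsub)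
        (le_of_eq (MeasureTheory.ae_iff.1 hae))) zero_le
      exact absurd this hpos.ne'
    -- zero derivative of log p - log q on X
    have hderiv : ∀ y ∈ X, HasFDerivAt
        (fun z => Real.log (p z) - Real.log (q z)) (0 : EuclideanSpace ℝ (Fin d) →L[ℝ] ℝ) y := by
      intro y hy
      have h1 := (hsp y hy).hasFDerivAt
      have h2 := (hsq y hy).hasFDerivAt
      have := h1.sub h2
      rw [hspq hy, sub_self] at this
      exact this
    obtain ⟨x₀, hx₀⟩ := hXc.nonempty
    set c : ℝ := Real.log (p x₀) - Real.log (q x₀) with hc_def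
    have hconst : ∀ y ∈ X, Real.log (p y) - Real.log (q y) = c := fun y hy =>
      const_of_fderiv_zero hXo hXc.isPreconnected hderiv hy hx₀
    have hpq : ∀ y ∈ X, p y = Real.exp c * q y := by
      intro y hy
      have h1 : Real.log (p y) = c + Real.log (q y) := by
        have := hconst y hy; linarith
      calc p y = Real.exp (Real.log (p y)) := (Real.exp_log (hp_pos y hy)).symm
        _ = Real.exp c * Real.exp (Real.log (q y)) := by rw [h1, Real.exp_add]
        _ = Real.exp c * q y := by rw [Real.exp_log (hq_pos y hy)]
    have hint : (1:ℝ) = Real.exp c := by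
      calc (1:ℝ) = ∫ x in X, p x := hp_norm.symm
        _ = ∫ x in X, Real.exp c * q x :=
            setIntegral_congr_fun hXmeas (fun y hy => hpq y hy)
        _ = Real.exp c * ∫ x in X, q x := integral_const_mul _ _
        _ = Real.exp c := by rw [hq_norm, mul_one]
    intro y hy
    rw [hpq y hy, ← hint, one_mul]
  · intro hpq
    have hsp_eq : ∀ x ∈ X, sp x = sq x := by
      intro x hx
      have heq : (fun y => Real.log (p y)) =ᶠ[nhds x] (fun y => Real.log (q y)) := by
        filter_upwards [hXo.mem_nhds hx] with z hz
        rw [hpq hz]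
      have h2 := hasFDerivAt_iff_hasGradientAt.1
        (((hsq x hx).hasFDerivAt).congr_of_eventuallyEq heq)
      have := (hsp x hx).unique h2
      simpa using this
    have hae : g =ᵐ[ν] 0 := by
      filter_upwards [hXae] with x hx
      simp [hg_def, hsp_eq x hx, sub_self]
    exact integral_eq_zero_of_ae hae
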